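/- Let 𝓛 : (ℝⁿ)^{N+1} → ℝ be a smooth time-independent N-th order Lagrangian and q : ℝ → ℝⁿ a smooth solution of the Euler–Lagrange equation ∑_{k=0}^{N} (−1)^k (d/dt)^k ∂_{q^{(k)}} 𝓛 = 0. Then t ↦ ∑_{i=1}^N ∑_{k=0}^{i−1} (−1)^k (d/dt)^k[∂_{q^{(i)}} 𝓛(q,…,q⁽ᴺ⁾)] · q^{(i−k)}(t) − 𝓛(q(t),…,q⁽ᴺ⁾(t)) is constant (the higher-order energy first integral). -/

import Mathlib

open scoped RealInnerProductSpace

/-- The gradient of a time-independent `N`-th order Lagrangian `𝓛(q, …, q⁽ᴺ⁾)`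
with respect to its block argument `q⁽ⁱ⁾`, evaluated along the motion `q` at time `t`. -/
noncomputable def pgradAut {n N : ℕ}
    (𝓛 : (Fin (N + 1) → EuclideanSpace ℝ (Fin n)) → ℝ)
    (q : ℝ → EuclideanSpace ℝ (Fin n)) (i : Fin (N + 1)) (t : ℝ) :
    EuclideanSpace ℝ (Fin n) :=
  gradient
    (fun y => 𝓛 (Function.update (fun j : Fin (N + 1) => iteratedDeriv (j : ℕ) q t) i y))
    (iteratedDeriv (i : ℕ) q t)


section aux

variable {n N : ℕ} {𝓛 : (Fin (N + 1) → EuclideanSpace ℝ (Fin n)) → ℝ}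
  {q : ℝ → EuclideanSpace ℝ (Fin n)}

lemma pgradAut_eq (h𝓛 : ContDiff ℝ (⊤ : ℕ∞) 𝓛) (i : Fin (N + 1)) (t : ℝ) :
    pgradAut 𝓛 q i t =
      (InnerProductSpace.toDual ℝ (EuclideanSpace ℝ (Fin n))).symm
        ((fderiv ℝ 𝓛 (fun j : Fin (N + 1) => iteratedDeriv (j : ℕ) q t)).comp
          (ContinuousLinearMap.pi (Pi.single i (ContinuousLinearMap.id ℝ _)))) := by
  set x : Fin (N + 1) → EuclideanSpace ℝ (Fin n) := fun j => iteratedDeriv (j : ℕ) q t with hx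
  have h2 : HasFDerivAt 𝓛 (fderiv ℝ 𝓛 x) (Function.update x i (x i)) := by
    rw [Function.update_eq_self]
    exact ((h𝓛.differentiable (by simp)) x).hasFDerivAt
  have hup : HasFDerivAt (fun y => 𝓛 (Function.update x i y))
      ((fderiv ℝ 𝓛 x).comp
        (ContinuousLinearMap.pi (Pi.single i (ContinuousLinearMap.id ℝ _)))) (x i) :=
    h2.comp (x i) (hasFDerivAt_update x (x i))
  simp only [pgradAut, gradient, ← hx]
  rw [hup.fderiv]

lemma pgradAut_inner (h𝓛 : ContDiff ℝ (⊤ : ℕ∞) 𝓛) (i : Fin (N + 1)) (t : ℝ)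
    (v : EuclideanSpace ℝ (Fin n)) :
    ⟪pgradAut 𝓛 q i t, v⟫ =
      fderiv ℝ 𝓛 (fun j : Fin (N + 1) => iteratedDeriv (j : ℕ) q t) (Pi.single i v) := by
  rw [pgradAut_eq h𝓛, InnerProductSpace.toDual_symm_apply]
  simp only [ContinuousLinearMap.comp_apply]
  congr 1
  ext j
  rcases eq_or_ne j i with h | h
  · subst h; simp
  · simp [Pi.single_apply, h, ContinuousLinearMap.pi_apply]

lemma pgradAut_contDiff (h𝓛 : ContDiff ℝ (⊤ : ℕ∞) 𝓛) (hq : ContDiff ℝ (⊤ : ℕ∞) q)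
    (i : Fin (N + 1)) :
    ContDiff ℝ (⊤ : ℕ∞) (pgradAut 𝓛 q i) := by
  have hQ : ContDiff ℝ (⊤ : ℕ∞) (fun t => (fun j : Fin (N + 1) => iteratedDeriv (j : ℕ) q t)) := by
    rw [contDiff_pi]
    intro j
    simpa [iteratedDeriv_eq_iterate] using hq.iterate_deriv (j : ℕ)
  have hA : ContDiff ℝ (⊤ : ℕ∞)
      (fun t => fderiv ℝ 𝓛 (fun j : Fin (N + 1) => iteratedDeriv (j : ℕ) q t)) :=
    (h𝓛.fderiv_right (by exact_mod_cast le_top)).comp hQ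
  have hrep : pgradAut 𝓛 q i = fun t =>
      (WithLp.toLp 2 (fun a : Fin n => fderiv ℝ 𝓛 (fun j : Fin (N + 1) => iteratedDeriv (j : ℕ) q t)
        (Pi.single i (EuclideanSpace.single a 1))) : EuclideanSpace ℝ (Fin n)) := by
    funext t
    ext a
    have := pgradAut_inner (q := q) h𝓛 i t (EuclideanSpace.single a 1)
    rw [EuclideanSpace.inner_single_right] at this
    simpa using this
  rw [hrep]
  rw [contDiff_euclidean]
  intro a
  exact (ContinuousLinearMap.apply ℝ ℝ
    (Pi.single i (EuclideanSpace.single a (1:ℝ)))).contDiff.comp hA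

end aux

/-- Higher-order energy first integral: for a smooth time-independent `N`-th
order Lagrangian, `∑_{i=1}^N ∑_{k=0}^{i−1} (−1)^k (d/dt)^k[∂_{q⁽ⁱ⁾}𝓛] · q⁽ⁱ⁻ᵏ⁾ − 𝓛`
is constant along solutions of the Euler–Lagrange equation. -/
theorem stmt_10 {n N : ℕ}
    (𝓛 : (Fin (N + 1) → EuclideanSpace ℝ (Fin n)) → ℝ)
    (h𝓛 : ContDiff ℝ (⊤ : ℕ∞) 𝓛)
    (q : ℝ → EuclideanSpace ℝ (Fin n)) (hq : ContDiff ℝ (⊤ : ℕ∞) q)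
    (hEL : ∀ t : ℝ,
      ∑ k : Fin (N + 1), ((-1 : ℝ) ^ (k : ℕ)) • iteratedDeriv (k : ℕ) (pgradAut 𝓛 q k) t = 0) :
    ∃ c : ℝ, ∀ t : ℝ,
      (∑ i : Fin (N + 1), ∑ k ∈ Finset.range (i : ℕ),
        (-1 : ℝ) ^ k *
          ⟪iteratedDeriv k (pgradAut 𝓛 q i) t, iteratedDeriv ((i : ℕ) - k) q t⟫)
      - 𝓛 (fun i : Fin (N + 1) => iteratedDeriv (i : ℕ) q t)
      = c := by
  classical
  have hone : ((⊤ : ℕ∞) : WithTop ℕ∞) ≠ 0 := by simp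
  set P : Fin (N + 1) → ℝ → EuclideanSpace ℝ (Fin n) := pgradAut 𝓛 q with hPdef
  have hqm : ∀ m : ℕ, ContDiff ℝ (⊤ : ℕ∞) (iteratedDeriv m q) := fun m => by
    simpa [iteratedDeriv_eq_iterate] using hq.iterate_deriv m
  have hPk : ∀ (i : Fin (N + 1)) (k : ℕ), ContDiff ℝ (⊤ : ℕ∞) (iteratedDeriv k (P i)) :=
    fun i k => by
      simpa [iteratedDeriv_eq_iterate] using (pgradAut_contDiff h𝓛 hq i).iterate_deriv k
  have hDq : ∀ (m : ℕ) (t : ℝ), HasDerivAt (iteratedDeriv m q) (iteratedDeriv (m + 1) q t) t :=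
    fun m t => by
      rw [iteratedDeriv_succ]
      exact ((hqm m).differentiable hone t).hasDerivAt
  have hDP : ∀ (i : Fin (N + 1)) (k : ℕ) (t : ℝ),
      HasDerivAt (iteratedDeriv k (P i)) (iteratedDeriv (k + 1) (P i) t) t := fun i k t => by
    rw [iteratedDeriv_succ]
    exact ((hPk i k).differentiable hone t).hasDerivAt
  -- derivative of the Lagrangian term
  have hB : ∀ t : ℝ, HasDerivAt (fun t => 𝓛 (fun j : Fin (N + 1) => iteratedDeriv (j : ℕ) q t))
      (∑ i : Fin (N + 1), ⟪P i t, iteratedDeriv ((i : ℕ) + 1) q t⟫) t := by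
    intro t
    have hQ' : HasDerivAt (fun t => (fun j : Fin (N + 1) => iteratedDeriv (j : ℕ) q t))
        (fun j : Fin (N + 1) => iteratedDeriv ((j : ℕ) + 1) q t) t :=
      hasDerivAt_pi.2 fun j => hDq (j : ℕ) t
    have h𝓛' : HasFDerivAt 𝓛
        (fderiv ℝ 𝓛 (fun j : Fin (N + 1) => iteratedDeriv (j : ℕ) q t))
        (fun j : Fin (N + 1) => iteratedDeriv (j : ℕ) q t) :=
      ((h𝓛.differentiable hone) _).hasFDerivAt
    have hcomp := h𝓛'.comp_hasDerivAt t hQ'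
    convert hcomp using 1
    · rfl
    · rfl
    · rfl
    have hv : (fun j : Fin (N + 1) => iteratedDeriv ((j : ℕ) + 1) q t)
        = ∑ i : Fin (N + 1), Pi.single i (iteratedDeriv ((i : ℕ) + 1) q t) :=
      (Finset.univ_sum_single _).symm
    rw [hv, map_sum]
    exact Finset.sum_congr rfl fun i _ => pgradAut_inner h𝓛 i t _
  -- derivative of each inner sum
  have hS : ∀ (i : Fin (N + 1)) (t : ℝ), HasDerivAt
      (fun t => ∑ k ∈ Finset.range (i : ℕ),
        (-1 : ℝ) ^ k * ⟪iteratedDeriv k (P i) t, iteratedDeriv ((i : ℕ) - k) q t⟫)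
      (⟪P i t, iteratedDeriv ((i : ℕ) + 1) q t⟫
        - (-1 : ℝ) ^ (i : ℕ) * ⟪iteratedDeriv (i : ℕ) (P i) t, iteratedDeriv 1 q t⟫) t := by
    intro i t
    set f : ℕ → ℝ := fun k =>
      (-1 : ℝ) ^ k * ⟪iteratedDeriv k (P i) t, iteratedDeriv ((i : ℕ) + 1 - k) q t⟫ with hf
    have key : ∀ k ∈ Finset.range (i : ℕ), HasDerivAt
        (fun t => (-1 : ℝ) ^ k * ⟪iteratedDeriv k (P i) t, iteratedDeriv ((i : ℕ) - k) q t⟫)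
        (f k - f (k + 1)) t := by
      intro k hk
      have hk' : k < (i : ℕ) := Finset.mem_range.1 hk
      have h1 := ((hDP i k t).inner ℝ (hDq ((i : ℕ) - k) t)).const_mul ((-1 : ℝ) ^ k)
      convert h1 using 1
      · rfl
      · rfl
      have e1 : (i : ℕ) - k + 1 = (i : ℕ) + 1 - k := by omega
      have e2 : (i : ℕ) + 1 - (k + 1) = (i : ℕ) - k := by omega
      simp only [hf, e1, e2, pow_succ]
      ring
    have hsum := HasDerivAt.fun_sum key
    rw [Finset.sum_range_sub'] at hsum
    convert hsum using 1
    · rfl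
    · rfl
    have e0 : (i : ℕ) + 1 - (i : ℕ) = 1 := by omega
    simp [hf, e0, iteratedDeriv_zero]
  -- total derivative is zero
  have hE' : ∀ t : ℝ, HasDerivAt (fun t =>
      (∑ i : Fin (N + 1), ∑ k ∈ Finset.range (i : ℕ),
        (-1 : ℝ) ^ k * ⟪iteratedDeriv k (pgradAut 𝓛 q i) t, iteratedDeriv ((i : ℕ) - k) q t⟫)
      - 𝓛 (fun i : Fin (N + 1) => iteratedDeriv (i : ℕ) q t)) 0 t := by
    intro t
    have hA := HasDerivAt.fun_sum (u := Finset.univ) (fun i _ => hS i t)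
    have htot := hA.sub (hB t)
    convert htot using 1
    · rfl
    · rfl
    · rfl
    rw [Finset.sum_sub_distrib]
    have hz : ∑ i : Fin (N + 1),
        (-1 : ℝ) ^ (i : ℕ) * ⟪iteratedDeriv (i : ℕ) (P i) t, iteratedDeriv 1 q t⟫ = 0 := by
      have h0 := hEL t
      have : ∑ i : Fin (N + 1),
          (-1 : ℝ) ^ (i : ℕ) * ⟪iteratedDeriv (i : ℕ) (P i) t, iteratedDeriv 1 q t⟫
          = ⟪∑ i : Fin (N + 1),
              ((-1 : ℝ) ^ (i : ℕ)) • iteratedDeriv (i : ℕ) (P i) t, iteratedDeriv 1 q t⟫ := by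
        rw [sum_inner]
        exact Finset.sum_congr rfl fun i _ => (real_inner_smul_left _ _ _).symm
      rw [this, h0, inner_zero_left]
    rw [hz]
    ring
  refine ⟨(∑ i : Fin (N + 1), ∑ k ∈ Finset.range (i : ℕ),
        (-1 : ℝ) ^ k * ⟪iteratedDeriv k (pgradAut 𝓛 q i) 0, iteratedDeriv ((i : ℕ) - k) q 0⟫)
      - 𝓛 (fun i : Fin (N + 1) => iteratedDeriv (i : ℕ) q 0), fun t => ?_⟩
  exact is_const_of_deriv_eq_zero (fun s => (hE' s).differentiableAt)
    (fun s => (hE' s).deriv) t 0
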